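/- Let Q_op : [0,T] → S^n_{++} satisfy the matrix ODE dQ_op/dt = A Q_op + Q_op A^T + λ(t) Q_op + (1/λ(t)) B_w Q_w B_w^T for a positive continuous function λ(·), and let x solve ẋ = A x + B_w w with x(0) = 0 and w(t) ∈ E(0, Q_w) for all t, where Q_op(0) = ε I for ε > 0. Then for every c ∈ ℝ^n and t ∈ [0,T], c^T x(t) ≤ sqrt(c^T Q_op(t) c); i.e., x(t) ∈ E(0, Q_op(t)). -/

import Mathlib

open Matrix Set
attribute [local instance] Matrix.linftyOpNormedAddCommGroup Matrix.linftyOpNormedSpace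
  Matrix.linftyOpNormedRing Matrix.linftyOpNormedAlgebra

/-- Matrix exponential over ℝ. -/
noncomputable def mexp {n : ℕ} (A : Matrix (Fin n) (Fin n) ℝ) : Matrix (Fin n) (Fin n) ℝ :=
  NormedSpace.exp A

/-- The ellipsoid `E(q,Q) = {q + Q^{1/2} v : vᵀv ≤ 1}` for `Q` positive semidefinite. -/
noncomputable def ellipsoid {n : ℕ} (q : Fin n → ℝ) {Q : Matrix (Fin n) (Fin n) ℝ}
    (hQ : Q.PosSemidef) : Set (Fin n → ℝ) :=
  {x | ∃ v : Fin n → ℝ, v ⬝ᵥ v ≤ 1 ∧ x = q + (hQ.1.eigenvectorUnitary.1 * diagonal ((↑) ∘ (Real.sqrt ∘ hQ.1.eigenvalues)) *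
    (star hQ.1.eigenvectorUnitary : Matrix (Fin n) (Fin n) ℝ)) *ᵥ v}

section Helpers

theorem ell_sqrt_props {m : ℕ} {Q : Matrix (Fin m) (Fin m) ℝ} (hQ : Q.PosSemidef) :
    (hQ.1.eigenvectorUnitary.1 * diagonal ((↑) ∘ (Real.sqrt ∘ hQ.1.eigenvalues)) *
      (star hQ.1.eigenvectorUnitary : Matrix (Fin m) (Fin m) ℝ))ᵀ =
    hQ.1.eigenvectorUnitary.1 * diagonal ((↑) ∘ (Real.sqrt ∘ hQ.1.eigenvalues)) *
      (star hQ.1.eigenvectorUnitary : Matrix (Fin m) (Fin m) ℝ) ∧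
    (hQ.1.eigenvectorUnitary.1 * diagonal ((↑) ∘ (Real.sqrt ∘ hQ.1.eigenvalues)) *
      (star hQ.1.eigenvectorUnitary : Matrix (Fin m) (Fin m) ℝ)) *
    (hQ.1.eigenvectorUnitary.1 * diagonal ((↑) ∘ (Real.sqrt ∘ hQ.1.eigenvalues)) *
      (star hQ.1.eigenvectorUnitary : Matrix (Fin m) (Fin m) ℝ)) = Q := by
  constructor
  · rw [Matrix.transpose_mul, Matrix.transpose_mul, Matrix.diagonal_transpose]
    have h1 : (star hQ.1.eigenvectorUnitary : Matrix (Fin m) (Fin m) ℝ) =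
        (hQ.1.eigenvectorUnitary.1)ᵀ := by
      rw [Matrix.star_eq_conjTranspose, Matrix.conjTranspose_eq_transpose_of_trivial]
    rw [h1, Matrix.transpose_transpose, mul_assoc]
  · have hU : (star hQ.1.eigenvectorUnitary : Matrix (Fin m) (Fin m) ℝ) * hQ.1.eigenvectorUnitary.1 = 1 :=
      Unitary.coe_star_mul_self _
    have hD : diagonal ((↑) ∘ (Real.sqrt ∘ hQ.1.eigenvalues)) * diagonal ((↑) ∘ (Real.sqrt ∘ hQ.1.eigenvalues))
        = diagonal (RCLike.ofReal ∘ hQ.1.eigenvalues : Fin m → ℝ) := by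
      rw [Matrix.diagonal_mul_diagonal]
      congr 1; funext i
      simp [Real.mul_self_sqrt (hQ.eigenvalues_nonneg i)]
    conv_rhs => rw [hQ.1.spectral_theorem, Unitary.conjStarAlgAut_apply]
    calc _ = hQ.1.eigenvectorUnitary.1 * diagonal ((↑) ∘ (Real.sqrt ∘ hQ.1.eigenvalues)) *
          ((star hQ.1.eigenvectorUnitary : Matrix (Fin m) (Fin m) ℝ) * hQ.1.eigenvectorUnitary.1) *
          diagonal ((↑) ∘ (Real.sqrt ∘ hQ.1.eigenvalues)) *
          (star hQ.1.eigenvectorUnitary : Matrix (Fin m) (Fin m) ℝ) := by simp only [mul_assoc]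
      _ = _ := by rw [hU, mul_one, mul_assoc _ (Matrix.diagonal _) (Matrix.diagonal _), hD]

theorem hasDerivAt_vec_apply {n : ℕ} {x : ℝ → Fin n → ℝ}
    {x' : Fin n → ℝ} {t : ℝ} (h : HasDerivAt x x' t) (i : Fin n) :
    HasDerivAt (fun s => x s i) (x' i) t := by
  let L : (Fin n → ℝ) →L[ℝ] ℝ := ContinuousLinearMap.proj i
  exact (L.hasFDerivAt.comp_hasDerivAt t h)

theorem hasDerivAt_matrix_apply {n q : ℕ} {M : ℝ → Matrix (Fin n) (Fin q) ℝ}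
    {M' : Matrix (Fin n) (Fin q) ℝ} {t : ℝ}
    (h : HasDerivAt M M' t) (i : Fin n) (j : Fin q) :
    HasDerivAt (fun s => M s i j) (M' i j) t := by
  let L0 : Matrix (Fin n) (Fin q) ℝ →ₗ[ℝ] ℝ :=
    { toFun := fun N => N i j
      map_add' := fun a b => rfl
      map_smul' := fun a b => rfl }
  let L : Matrix (Fin n) (Fin q) ℝ →L[ℝ] ℝ := LinearMap.toContinuousLinearMap L0
  exact (L.hasFDerivAt.comp_hasDerivAt t h)

theorem hasDerivAt_quadForm {n q : ℕ} {u : ℝ → Fin n → ℝ} {M : ℝ → Matrix (Fin n) (Fin q) ℝ}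
    {v : ℝ → Fin q → ℝ} {u' : Fin n → ℝ} {M' : Matrix (Fin n) (Fin q) ℝ} {v' : Fin q → ℝ}
    {t : ℝ} (hu : HasDerivAt u u' t) (hM : HasDerivAt M M' t) (hv : HasDerivAt v v' t) :
    HasDerivAt (fun s => u s ⬝ᵥ M s *ᵥ v s)
      (u' ⬝ᵥ M t *ᵥ v t + u t ⬝ᵥ M' *ᵥ v t + u t ⬝ᵥ M t *ᵥ v') t := by
  have key : HasDerivAt (fun s => ∑ i, u s i * ∑ j, M s i j * v s j)
      (∑ i, (u' i * (∑ j, M t i j * v t j)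
        + u t i * (∑ j, (M' i j * v t j + M t i j * v' j)))) t := by
    refine HasDerivAt.fun_sum fun i _ => ?_
    exact (hasDerivAt_vec_apply hu i).mul
      (HasDerivAt.fun_sum fun j _ => (hasDerivAt_matrix_apply hM i j).mul (hasDerivAt_vec_apply hv j))
  have h2 : (∑ i, (u' i * (∑ j, M t i j * v t j)
        + u t i * (∑ j, (M' i j * v t j + M t i j * v' j))))
      = u' ⬝ᵥ M t *ᵥ v t + u t ⬝ᵥ M' *ᵥ v t + u t ⬝ᵥ M t *ᵥ v' := by
    simp only [dotProduct, Matrix.mulVec, mul_add, Finset.mul_sum,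
      Finset.sum_add_distrib, mul_assoc, add_assoc]
  rw [← h2]
  exact key

theorem hasDerivAt_ring_inverse_comp {n : ℕ} {Q : ℝ → Matrix (Fin n) (Fin n) ℝ}
    {Q' : Matrix (Fin n) (Fin n) ℝ} {t : ℝ} (h : HasDerivAt Q Q' t)
    (hu : IsUnit (Q t)) :
    HasDerivAt (fun s => Ring.inverse (Q s))
      (-(Ring.inverse (Q t) * Q' * Ring.inverse (Q t))) t := by
  have h1 := (hasFDerivAt_ringInverse (𝕜 := ℝ) hu.unit)
  rw [IsUnit.unit_spec] at h1
  have h2 := h1.comp_hasDerivAt t h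
  convert h2 using 1
  · rfl
  · rfl
  · rfl
  · rfl
  simp [Ring.inverse_unit, ContinuousLinearMap.mulLeftRight,
    Matrix.nonsing_inv_eq_ringInverse]

theorem dot_swap {n q : ℕ} (a : Fin n → ℝ) (M : Matrix (Fin n) (Fin q) ℝ) (b : Fin q → ℝ) :
    a ⬝ᵥ M *ᵥ b = b ⬝ᵥ Mᵀ *ᵥ a := by
  simp only [dotProduct, Matrix.mulVec, Matrix.transpose_apply, Finset.mul_sum]
  rw [Finset.sum_comm]
  exact Finset.sum_congr rfl fun j _ => Finset.sum_congr rfl fun i _ => by ring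

theorem mulVec_dot {n q : ℕ} (M : Matrix (Fin n) (Fin q) ℝ) (a : Fin q → ℝ) (b : Fin n → ℝ) :
    (M *ᵥ a) ⬝ᵥ b = a ⬝ᵥ Mᵀ *ᵥ b := by
  rw [dotProduct_comm, dot_swap]

theorem herm_transpose {n : ℕ} {A : Matrix (Fin n) (Fin n) ℝ} (h : A.IsHermitian) :
    Aᵀ = A := by
  ext i j
  have := congrFun (congrFun h.eq i) j
  simpa [Matrix.conjTranspose_apply] using this

theorem dot_cs {q : ℕ} (a b : Fin q → ℝ) : (a ⬝ᵥ b) ^ 2 ≤ (a ⬝ᵥ a) * (b ⬝ᵥ b) := by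
  simpa [dotProduct, pow_two] using
    Finset.sum_mul_sq_le_sq_mul_sq Finset.univ a b

theorem dot_self_nonneg {q : ℕ} (a : Fin q → ℝ) : 0 ≤ a ⬝ᵥ a :=
  Finset.sum_nonneg fun i _ => mul_self_nonneg _

end Helpers

/-- if `Q_op` solves `Q̇ = AQ + QAᵀ + λ(t)Q + λ(t)⁻¹ B_w Q_w B_wᵀ` with
`Q_op(0) = εI` and is positive definite on `[0,T]`, and `x` solves `ẋ = Ax + B_w w` with
`x(0) = 0` and `w(t) ∈ E(0,Q_w)`, then `cᵀx(t) ≤ sqrt(cᵀ Q_op(t) c)` for all `c` and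
`t ∈ [0,T]`. -/
theorem open_loop_ellipsoidal_bound {n p : ℕ}
    (A : Matrix (Fin n) (Fin n) ℝ) (Bw : Matrix (Fin n) (Fin p) ℝ)
    (Qw : Matrix (Fin p) (Fin p) ℝ) (hQw : Qw.PosDef)
    (T ε : ℝ) (hε : 0 < ε)
    (lam : ℝ → ℝ) (hlamc : Continuous lam) (hlam : ∀ t, 0 < lam t)
    (Qop : ℝ → Matrix (Fin n) (Fin n) ℝ)
    (hQpos : ∀ t ∈ Set.Icc (0:ℝ) T, (Qop t).PosDef)
    (hQ0 : Qop 0 = ε • (1 : Matrix (Fin n) (Fin n) ℝ))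
    (hQode : ∀ t ∈ Set.Icc (0:ℝ) T, HasDerivAt Qop
      (A * Qop t + Qop t * Aᵀ + lam t • Qop t + (lam t)⁻¹ • (Bw * Qw * Bwᵀ)) t)
    (w : ℝ → Fin p → ℝ) (hw : ∀ t, w t ∈ ellipsoid 0 hQw.posSemidef)
    (x : ℝ → Fin n → ℝ) (hx0 : x 0 = 0)
    (hx : ∀ t ∈ Set.Icc (0:ℝ) T, HasDerivAt x (A *ᵥ x t + Bw *ᵥ w t) t) :
    ∀ c : Fin n → ℝ, ∀ t ∈ Set.Icc (0:ℝ) T, c ⬝ᵥ x t ≤ Real.sqrt (c ⬝ᵥ Qop t *ᵥ c) := by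
  intro c t1 ht1
  obtain ⟨ht10, ht1T⟩ := ht1
  have hT : (0:ℝ) ≤ T := ht10.trans ht1T
  have h0T : (0:ℝ) ∈ Set.Icc (0:ℝ) T := ⟨le_refl 0, hT⟩
  have ht1mem : t1 ∈ Set.Icc (0:ℝ) T := ⟨ht10, ht1T⟩
  set S : Matrix (Fin p) (Fin p) ℝ := hQw.posSemidef.1.eigenvectorUnitary.1 * diagonal ((↑) ∘ (Real.sqrt ∘ hQw.posSemidef.1.eigenvalues)) *
    (star hQw.posSemidef.1.eigenvectorUnitary : Matrix (Fin p) (Fin p) ℝ) with hSdef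
  have hSsymm : Sᵀ = S := (ell_sqrt_props hQw.posSemidef).1
  have hSS : S * S = Qw := (ell_sqrt_props hQw.posSemidef).2
  set M : Matrix (Fin n) (Fin n) ℝ := Bw * Qw * Bwᵀ with hMdef
  set P : ℝ → Matrix (Fin n) (Fin n) ℝ := fun t => Ring.inverse (Qop t) with hPdef
  have hPQ : ∀ t ∈ Set.Icc (0:ℝ) T, P t * Qop t = 1 :=
    fun t ht => Ring.inverse_mul_cancel _ (hQpos t ht).isUnit
  have hQP : ∀ t ∈ Set.Icc (0:ℝ) T, Qop t * P t = 1 :=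
    fun t ht => Ring.mul_inverse_cancel _ (hQpos t ht).isUnit
  have hQsymm : ∀ t ∈ Set.Icc (0:ℝ) T, (Qop t)ᵀ = Qop t :=
    fun t ht => herm_transpose (hQpos t ht).1
  have hPsymm : ∀ t ∈ Set.Icc (0:ℝ) T, (P t)ᵀ = P t := by
    intro t ht
    have h1 : Qop t * (P t)ᵀ = 1 := by
      have h2 := congrArg Matrix.transpose (hPQ t ht)
      rwa [Matrix.transpose_mul, Matrix.transpose_one, hQsymm t ht] at h2
    calc (P t)ᵀ = (P t * Qop t) * (P t)ᵀ := by rw [hPQ t ht, one_mul]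
    _ = P t * (Qop t * (P t)ᵀ) := by rw [mul_assoc]
    _ = P t := by rw [h1, mul_one]
  set Qd : ℝ → Matrix (Fin n) (Fin n) ℝ :=
    fun t => A * Qop t + Qop t * Aᵀ + lam t • Qop t + (lam t)⁻¹ • M with hQddef
  have hPderiv : ∀ t ∈ Set.Icc (0:ℝ) T, HasDerivAt P (-(P t * Qd t * P t)) t :=
    fun t ht => hasDerivAt_ring_inverse_comp (hQode t ht) (hQpos t ht).isUnit
  set V : ℝ → ℝ := fun t => x t ⬝ᵥ P t *ᵥ x t with hVdef
  set V' : ℝ → ℝ := fun t =>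
    (A *ᵥ x t + Bw *ᵥ w t) ⬝ᵥ P t *ᵥ x t + x t ⬝ᵥ (-(P t * Qd t * P t)) *ᵥ x t
      + x t ⬝ᵥ P t *ᵥ (A *ᵥ x t + Bw *ᵥ w t) with hV'def
  have hVderiv : ∀ t ∈ Set.Icc (0:ℝ) T, HasDerivAt V (V' t) t :=
    fun t ht => hasDerivAt_quadForm (hx t ht) (hPderiv t ht) (hx t ht)
  -- the key differential inequality
  have hkey : ∀ t ∈ Set.Icc (0:ℝ) T, V' t ≤ lam t * (1 - V t) := by
    intro t ht
    obtain ⟨v, hvv, hwv⟩ := hw t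
    rw [zero_add] at hwv
    set u : Fin p → ℝ := (Bwᵀ * P t) *ᵥ x t with hudef
    -- matrix simplification of P Qd P
    have hmat : P t * Qd t * P t
        = P t * A + Aᵀ * P t + lam t • P t + (lam t)⁻¹ • (P t * M * P t) := by
      simp only [hQddef, mul_add, add_mul, Matrix.mul_smul, Matrix.smul_mul, mul_assoc,
        hPQ t ht, hQP t ht, mul_one, one_mul]
      rw [← mul_assoc (P t) (Qop t), hPQ t ht, one_mul]
    have hPt := hPsymm t ht
    have eAP : x t ⬝ᵥ (Aᵀ * P t) *ᵥ x t = x t ⬝ᵥ (P t * A) *ᵥ x t := by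
      rw [dot_swap, Matrix.transpose_mul, Matrix.transpose_transpose, hPt]
    have hassoc : P t * M * P t = (P t * Bw) * Qw * (Bwᵀ * P t) := by
      rw [hMdef]; simp only [Matrix.mul_assoc]
    have ePMP : x t ⬝ᵥ (P t * M * P t) *ᵥ x t = u ⬝ᵥ Qw *ᵥ u := by
      rw [hassoc, hudef, mulVec_dot, Matrix.transpose_mul, Matrix.transpose_transpose, hPt,
        Matrix.mulVec_mulVec, Matrix.mulVec_mulVec]
    have ePw : x t ⬝ᵥ (P t * Bw) *ᵥ w t = w t ⬝ᵥ u := by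
      rw [dot_swap, Matrix.transpose_mul, hPt, hudef]
    have e1 : (A *ᵥ x t + Bw *ᵥ w t) ⬝ᵥ P t *ᵥ x t
        = x t ⬝ᵥ P t *ᵥ (A *ᵥ x t + Bw *ᵥ w t) := by
      rw [dot_swap, hPt]
    have e3 : x t ⬝ᵥ P t *ᵥ (A *ᵥ x t + Bw *ᵥ w t)
        = x t ⬝ᵥ (P t * A) *ᵥ x t + w t ⬝ᵥ u := by
      rw [Matrix.mulVec_add, dotProduct_add, Matrix.mulVec_mulVec,
        Matrix.mulVec_mulVec, ePw]
    have hVt : x t ⬝ᵥ P t *ᵥ x t = V t := rfl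
    have e2 : x t ⬝ᵥ (-(P t * Qd t * P t)) *ᵥ x t
        = -(2 * (x t ⬝ᵥ (P t * A) *ᵥ x t) + lam t * V t + (lam t)⁻¹ * (u ⬝ᵥ Qw *ᵥ u)) := by
      rw [Matrix.neg_mulVec, dotProduct_neg, hmat, Matrix.add_mulVec,
        Matrix.add_mulVec, Matrix.add_mulVec, dotProduct_add, dotProduct_add,
        dotProduct_add, eAP, Matrix.smul_mulVec, Matrix.smul_mulVec,
        dotProduct_smul, dotProduct_smul, smul_eq_mul, smul_eq_mul, ePMP, hVt]
      ring
    have hV'eq : V' t = 2 * (w t ⬝ᵥ u) - lam t * V t - (lam t)⁻¹ * (u ⬝ᵥ Qw *ᵥ u) := by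
      calc V' t = (A *ᵥ x t + Bw *ᵥ w t) ⬝ᵥ P t *ᵥ x t
            + x t ⬝ᵥ (-(P t * Qd t * P t)) *ᵥ x t
            + x t ⬝ᵥ P t *ᵥ (A *ᵥ x t + Bw *ᵥ w t) := rfl
      _ = 2 * (w t ⬝ᵥ u) - lam t * V t - (lam t)⁻¹ * (u ⬝ᵥ Qw *ᵥ u) := by
          rw [e1, e3, e2]; ring
    have huq : (S *ᵥ u) ⬝ᵥ (S *ᵥ u) = u ⬝ᵥ Qw *ᵥ u := by
      rw [mulVec_dot, hSsymm, Matrix.mulVec_mulVec, hSS]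
    have hwu : w t ⬝ᵥ u = v ⬝ᵥ (S *ᵥ u) := by
      rw [hwv, ← hSdef, mulVec_dot, hSsymm]
    have hq0 : 0 ≤ u ⬝ᵥ Qw *ᵥ u := huq ▸ dot_self_nonneg (S *ᵥ u)
    have hcs : (v ⬝ᵥ (S *ᵥ u)) ^ 2 ≤ u ⬝ᵥ Qw *ᵥ u := by
      have h1 := dot_cs v (S *ᵥ u)
      rw [huq] at h1
      nlinarith [mul_nonneg (sub_nonneg.2 hvv) hq0]
    rw [hV'eq, hwu]
    have hlt := hlam t
    have hinv : lam t * (lam t)⁻¹ = 1 := mul_inv_cancel₀ hlt.ne'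
    have hipos : 0 < (lam t)⁻¹ := inv_pos.2 hlt
    nlinarith [sq_nonneg (lam t - v ⬝ᵥ (S *ᵥ u)),
      mul_nonneg hipos.le (sub_nonneg.2 hcs)]
  -- the Gronwall / monotonicity argument
  set L : ℝ → ℝ := fun t => ∫ s in (0:ℝ)..t, lam s with hLdef
  have hL : ∀ t : ℝ, HasDerivAt L (lam t) t :=
    fun t => (hlamc.integral_hasStrictDerivAt 0 t).hasDerivAt
  set g : ℝ → ℝ := fun t => (1 - V t) * Real.exp (L t) with hgdef
  have hgderiv : ∀ t ∈ Set.Icc (0:ℝ) T,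
      HasDerivAt g (-V' t * Real.exp (L t) + (1 - V t) * (Real.exp (L t) * lam t)) t :=
    fun t ht => ((hVderiv t ht).const_sub 1).mul ((hL t).exp)
  have hgmono : MonotoneOn g (Set.Icc (0:ℝ) T) := by
    apply monotoneOn_of_deriv_nonneg (convex_Icc 0 T)
    · exact fun t ht => ((hgderiv t ht).continuousAt).continuousWithinAt
    · intro t ht
      rw [interior_Icc] at ht
      exact ((hgderiv t (Ioo_subset_Icc_self ht)).differentiableAt).differentiableWithinAt
    · intro t ht
      rw [interior_Icc] at ht
      have ht' := Ioo_subset_Icc_self ht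
      rw [(hgderiv t ht').deriv]
      have hk := hkey t ht'
      have he := Real.exp_pos (L t)
      nlinarith
  have hg0 : g 0 = 1 := by
    simp [hgdef, hVdef, hLdef, hx0, intervalIntegral.integral_same]
  have hgt1 : 1 ≤ g t1 := by
    rw [← hg0]; exact hgmono h0T ht1mem ht10
  have hV1 : V t1 ≤ 1 := by
    have he := Real.exp_pos (L t1)
    by_contra hc
    push_neg at hc
    have : g t1 < 1 := by
      have : (1 - V t1) < 0 := by linarith
      calc g t1 = (1 - V t1) * Real.exp (L t1) := rfl
      _ < 0 := mul_neg_of_neg_of_pos this he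
      _ < 1 := one_pos
    linarith
  -- final Cauchy–Schwarz step
  set X : Fin n → ℝ := x t1 with hXdef
  set S1 : Matrix (Fin n) (Fin n) ℝ := (hQpos t1 ht1mem).posSemidef.1.eigenvectorUnitary.1 *
    diagonal ((↑) ∘ (Real.sqrt ∘ (hQpos t1 ht1mem).posSemidef.1.eigenvalues)) *
    (star (hQpos t1 ht1mem).posSemidef.1.eigenvectorUnitary : Matrix (Fin n) (Fin n) ℝ) with hS1def
  have hS1symm : S1ᵀ = S1 := (ell_sqrt_props (hQpos t1 ht1mem).posSemidef).1
  have hS1S1 : S1 * S1 = Qop t1 := (ell_sqrt_props (hQpos t1 ht1mem).posSemidef).2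
  set a : Fin n → ℝ := S1 *ᵥ c with hadef
  set b : Fin n → ℝ := S1 *ᵥ (P t1 *ᵥ X) with hbdef
  have hXQ : Qop t1 *ᵥ (P t1 *ᵥ X) = X := by
    rw [Matrix.mulVec_mulVec, hQP t1 ht1mem, Matrix.one_mulVec]
  have hab : a ⬝ᵥ b = c ⬝ᵥ X := by
    rw [hadef, hbdef, mulVec_dot, hS1symm, Matrix.mulVec_mulVec, hS1S1, hXQ]

  have haa : a ⬝ᵥ a = c ⬝ᵥ Qop t1 *ᵥ c := by
    rw [hadef, mulVec_dot, hS1symm, Matrix.mulVec_mulVec, hS1S1]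
  have hbb : b ⬝ᵥ b = V t1 := by
    rw [hbdef, mulVec_dot, hS1symm, Matrix.mulVec_mulVec, hS1S1, hXQ, mulVec_dot,
      hPsymm t1 ht1mem]
  have hablesq : a ⬝ᵥ b ≤ Real.sqrt (a ⬝ᵥ a) * Real.sqrt (b ⬝ᵥ b) := by
    calc a ⬝ᵥ b ≤ |a ⬝ᵥ b| := le_abs_self _
    _ = Real.sqrt ((a ⬝ᵥ b) ^ 2) := (Real.sqrt_sq_eq_abs _).symm
    _ ≤ Real.sqrt ((a ⬝ᵥ a) * (b ⬝ᵥ b)) := Real.sqrt_le_sqrt (dot_cs a b)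
    _ = Real.sqrt (a ⬝ᵥ a) * Real.sqrt (b ⬝ᵥ b) := Real.sqrt_mul (dot_self_nonneg a) _
  calc c ⬝ᵥ x t1 = a ⬝ᵥ b := hab.symm
  _ ≤ Real.sqrt (a ⬝ᵥ a) * Real.sqrt (b ⬝ᵥ b) := hablesq
  _ ≤ Real.sqrt (a ⬝ᵥ a) * 1 := by
      have hb1 : Real.sqrt (b ⬝ᵥ b) ≤ 1 := Real.sqrt_le_one.2 (by rw [hbb]; exact hV1)
      exact mul_le_mul_of_nonneg_left hb1 (Real.sqrt_nonneg _)
  _ = Real.sqrt (c ⬝ᵥ Qop t1 *ᵥ c) := by rw [haa, mul_one]
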